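/- Let 0 < q < 1 and p ∈ ℝ. The function 𝒥(√(pρ)) = ∑_{k=0}^∞ (-1)^k (pρ)^k/([k]!)^2 satisfies the q-difference equation (□ + p)𝒥(√(pρ)) = 0 for all ρ > 0, where □f(ρ) = D₋(ρ D₊ f)(ρ). -/

import Mathlib

noncomputable def qNum (q : ℝ) (m : ℕ) : ℝ := (q ^ (m : ℤ) - q ^ (-(m : ℤ))) / (q - q⁻¹)

noncomputable def qFact (q : ℝ) (k : ℕ) : ℝ := ∏ m ∈ Finset.Icc 1 k, qNum q m

noncomputable def Dplus (q : ℝ) (f : ℝ → ℝ) (x : ℝ) : ℝ :=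
  (f x - f (q ^ 2 * x)) / ((1 - q ^ 2) * x)

noncomputable def Dminus (q : ℝ) (f : ℝ → ℝ) (x : ℝ) : ℝ :=
  (f x - f (q ^ (-2 : ℤ) * x)) / ((1 - q ^ (-2 : ℤ)) * x)

noncomputable def Box (q : ℝ) (f : ℝ → ℝ) : ℝ → ℝ :=
  Dminus q (fun x => x * Dplus q f x)

open Filter

lemma qNum_pos (q : ℝ) (hq0 : 0 < q) (hq1 : q < 1) {m : ℕ} (hm : 1 ≤ m) :
    0 < qNum q m := by
  have hq : q ≠ 0 := hq0.ne'
  have h1 : q ^ (m:ℤ) < 1 := by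
    rw [zpow_natCast]
    exact pow_lt_one₀ hq0.le hq1 (by omega)
  have h2 : 1 < q ^ (-(m:ℤ)) := by
    rw [zpow_neg, zpow_natCast]
    exact (one_lt_inv₀ (pow_pos hq0 m)).mpr (pow_lt_one₀ hq0.le hq1 (by omega))
  have hd : q - q⁻¹ < 0 := by
    have : 1 < q⁻¹ := (one_lt_inv₀ hq0).mpr hq1
    linarith
  exact div_pos_of_neg_of_neg (by linarith) hd

lemma qFact_pos (q : ℝ) (hq0 : 0 < q) (hq1 : q < 1) (k : ℕ) : 0 < qFact q k := by
  refine Finset.prod_pos fun m hm => qNum_pos q hq0 hq1 ?_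
  exact (Finset.mem_Icc.mp hm).1

lemma qNum_ge (q : ℝ) (hq0 : 0 < q) (hq1 : q < 1) (k : ℕ) :
    (q⁻¹) ^ k ≤ qNum q (k+1) := by
  have hq : q ≠ 0 := hq0.ne'
  have hd : q - q⁻¹ < 0 := by
    have : 1 < q⁻¹ := (one_lt_inv₀ hq0).mpr hq1
    linarith
  rw [qNum, le_div_iff_of_neg hd]
  have e1 : q ^ ((k+1:ℕ):ℤ) = q ^ (k+1) := by rw [zpow_natCast]
  have e2 : q ^ (-((k+1:ℕ):ℤ)) = (q⁻¹) ^ (k+1) := by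
    rw [zpow_neg, zpow_natCast, inv_pow]
  rw [e1, e2]
  have h1 : q ^ k ≤ 1 := pow_le_one₀ hq0.le hq1.le
  have h2 : (1:ℝ) ≤ (q⁻¹) ^ k := one_le_pow₀ (le_of_lt ((one_lt_inv₀ hq0).mpr hq1))
  have h3 : q ^ (k+1) ≤ q := by
    calc q ^ (k+1) = q ^ k * q := by ring
    _ ≤ 1 * q := by nlinarith
    _ = q := one_mul q
  have h4 : q ≤ (q⁻¹) ^ k * q := by nlinarith
  have : (q⁻¹)^k * (q - q⁻¹) = (q⁻¹)^k * q - (q⁻¹)^(k+1) := by ring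
  rw [this]
  linarith

lemma summable_aux (q : ℝ) (hq0 : 0 < q) (hq1 : q < 1) (y : ℝ) :
    Summable (fun k => (-1:ℝ)^k * y^k / (qFact q k)^2) := by
  apply summable_of_ratio_norm_eventually_le (r := 1/2) (by norm_num)
  have hinv : 1 < (q⁻¹)^2 := by
    have := (one_lt_inv₀ hq0).mpr hq1
    nlinarith
  have htend : Tendsto (fun k : ℕ => ((q⁻¹)^2)^k) atTop atTop :=
    tendsto_pow_atTop_atTop_of_one_lt hinv
  filter_upwards [htend.eventually_ge_atTop (2*|y|)] with k hk
  have hF : qFact q (k+1) = qFact q k * qNum q (k+1) :=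
    Finset.prod_Icc_succ_top (by omega) _
  have hFk := qFact_pos q hq0 hq1 k
  have hN := qNum_pos q hq0 hq1 (show 1 ≤ k+1 by omega)
  have hNge := qNum_ge q hq0 hq1 k
  have hN2 : 2*|y| ≤ (qNum q (k+1))^2 := by
    calc 2*|y| ≤ ((q⁻¹)^2)^k := hk
    _ = ((q⁻¹)^k)^2 := by ring
    _ ≤ (qNum q (k+1))^2 := by
        have h0 : (0:ℝ) ≤ (q⁻¹)^k := by positivity
        nlinarith
  have hnorm : ∀ m : ℕ, ‖(-1:ℝ)^m * y^m / (qFact q m)^2‖ = |y|^m / (qFact q m)^2 := by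
    intro m
    rw [Real.norm_eq_abs, abs_div, abs_mul, abs_pow, abs_pow, abs_neg, abs_one, one_pow,
      one_mul, abs_pow, abs_of_pos (qFact_pos q hq0 hq1 m)]
  rw [hnorm, hnorm, hF]
  rw [mul_pow, pow_succ]
  rw [div_le_iff₀ (by positivity), ]
  have key : |y| ≤ (qNum q (k+1))^2 / 2 := by linarith
  calc |y|^k * |y| ≤ |y|^k * ((qNum q (k+1))^2/2) := by
        have : (0:ℝ) ≤ |y|^k := by positivity
        nlinarith [abs_nonneg y]
  _ = 1/2 * (|y|^k / (qFact q k)^2) * ((qFact q k)^2 * (qNum q (k+1))^2) := by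
        field_simp
  _ = _ := by ring


lemma alg_aux (a b F s d P : ℝ) (hF : F ≠ 0) (hs : s ≠ 0) (hd : d ≠ 0)
    (hss : s - s⁻¹ ≠ 0) :
    2 * (a * -1 * (b * P) / (F * ((s - s⁻¹) / d))^2)
      - s^2 * (a * -1 * (b * P) / (F * ((s - s⁻¹) / d))^2)
      - (s^2)⁻¹ * (a * -1 * (b * P) / (F * ((s - s⁻¹) / d))^2)
      = P * d^2 * (a * b / F^2) := by
  have hrw : s - s⁻¹ = (s^2 - 1)/s := by field_simp
  have h2 : s^2 - 1 ≠ 0 := by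
    intro h; apply hss; rw [hrw, h, zero_div]
  rw [hrw]
  field_simp
  ring

/-- The q-Bessel function `𝒥(√(pρ)) = ∑ (-1)^k (pρ)^k/([k]!)²` satisfies
`(□ + p) 𝒥(√(pρ)) = 0` for all `ρ > 0`. -/
theorem qBessel_solves_box_eq (q : ℝ) (hq0 : 0 < q) (hq1 : q < 1) (p : ℝ) :
    ∀ ρ : ℝ, 0 < ρ →
      Box q (fun x => ∑' k : ℕ, (-1 : ℝ) ^ k * (p * x) ^ k / (qFact q k) ^ 2) ρ +
        p * (∑' k : ℕ, (-1 : ℝ) ^ k * (p * ρ) ^ k / (qFact q k) ^ 2) = 0 := by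
  intro ρ hρ
  have hq : q ≠ 0 := hq0.ne'
  have hρ' : ρ ≠ 0 := hρ.ne'
  have hq2 : q^2 < 1 := by nlinarith
  have h1 : (1 - q^2) ≠ 0 := by nlinarith
  have hzq : q^(-2:ℤ) = (q^2)⁻¹ := by
    rw [zpow_neg, show ((2:ℤ)) = ((2:ℕ):ℤ) by norm_num, zpow_natCast]
  have hinv1 : 1 < (q^2)⁻¹ := (one_lt_inv₀ (by positivity)).mpr hq2
  have h2 : (1 - (q^2)⁻¹) ≠ 0 := by nlinarith
  have hqd : q - q⁻¹ ≠ 0 := by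
    have : 1 < q⁻¹ := (one_lt_inv₀ hq0).mpr hq1
    intro h; nlinarith [sub_eq_zero.mp h]
  set f : ℝ → ℝ := fun x => ∑' k : ℕ, (-1 : ℝ) ^ k * (p * x) ^ k / (qFact q k) ^ 2 with hf
  set A := f ρ with hA
  set B := f (q^2*ρ) with hB
  set C := f ((q^2)⁻¹*ρ) with hC
  -- Step 1: Box in terms of A, B, C
  have hBox : Box q f ρ = (2*A - B - C)/((1-q^2)*(1-(q^2)⁻¹)*ρ) := by
    have hqq : q^2 * ((q^2)⁻¹*ρ) = ρ := by
      rw [← mul_assoc, mul_inv_cancel₀ (by positivity : (q:ℝ)^2 ≠ 0), one_mul]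
    have cancel : ∀ (X x : ℝ), x ≠ 0 → x * (X / ((1-q^2)*x)) = X/(1-q^2) := by
      intro X x hx
      field_simp
    have hx2 : (q^2)⁻¹*ρ ≠ 0 := by positivity
    simp only [Box, Dminus, Dplus, hzq, hqq, ← hA, ← hB, ← hC]
    rw [cancel _ ρ hρ', cancel _ _ hx2, div_sub_div_same, div_div]
    congr 1
    · ring
    · ring
  -- Step 2: the series identity
  set u : ℕ → ℝ := fun k => (-1 : ℝ) ^ k * (p * ρ) ^ k / (qFact q k) ^ 2 with hu
  have hAu : A = ∑' k, u k := rfl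
  have hsu : Summable u := summable_aux q hq0 hq1 (p*ρ)
  have hBu : B = ∑' k, (q^2)^k * u k := by
    rw [hB, hf]
    exact tsum_congr fun k => by rw [hu]; ring
  have hCu : C = ∑' k, ((q^2)⁻¹)^k * u k := by
    rw [hC, hf]
    exact tsum_congr fun k => by rw [hu]; ring
  have hsB : Summable (fun k => (q^2)^k * u k) := by
    refine (summable_aux q hq0 hq1 (p*(q^2*ρ))).congr fun k => by rw [hu]; ring
  have hsC : Summable (fun k => ((q^2)⁻¹)^k * u k) := by
    refine (summable_aux q hq0 hq1 (p*((q^2)⁻¹*ρ))).congr fun k => by rw [hu]; ring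
  have hs2 : Summable (fun k => 2 * u k) := hsu.mul_left 2
  set w : ℕ → ℝ := fun k => 2 * u k - (q^2)^k * u k - ((q^2)⁻¹)^k * u k with hw
  have hsw : Summable w := (hs2.sub hsB).sub hsC
  have hcomb : 2*A - B - C = ∑' k, w k := by
    rw [hAu, hBu, hCu, ← tsum_mul_left,
      ← hs2.tsum_sub hsB, ← (hs2.sub hsB).tsum_sub hsC]
  -- termwise identity
  have hterm : ∀ j : ℕ, w (j+1) = (p*ρ*(q-q⁻¹)^2) * u j := by
    intro j
    have hF : qFact q (j+1) = qFact q j * qNum q (j+1) :=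
      Finset.prod_Icc_succ_top (by omega) _
    have hFj : qFact q j ≠ 0 := (qFact_pos q hq0 hq1 j).ne'
    have hN : qNum q (j+1) = (q^(j+1) - (q^(j+1))⁻¹)/(q - q⁻¹) := by
      rw [qNum, zpow_natCast, zpow_neg, zpow_natCast]
    have hs : (q:ℝ)^(j+1) ≠ 0 := by positivity
    have hNne : qNum q (j+1) ≠ 0 := (qNum_pos q hq0 hq1 (by omega)).ne'
    simp only [hw, hu, hF, hN]
    have e1 : (q^2)^(j+1) = (q^(j+1))^2 := by
      rw [← pow_mul, mul_comm, pow_mul]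
    have e2 : ((q^2)⁻¹)^(j+1) = ((q^(j+1))^2)⁻¹ := by
      rw [inv_pow, e1]
    rw [e1, e2]
    have hsub : q^(j+1) - (q^(j+1))⁻¹ ≠ 0 := by
      have ha : q^(j+1) < 1 := pow_lt_one₀ hq0.le hq1 (by omega)
      have hb : 1 < (q^(j+1))⁻¹ := (one_lt_inv₀ (by positivity)).mpr ha
      intro h; nlinarith [sub_eq_zero.mp h]
    rw [pow_succ (-1:ℝ), pow_succ (p*ρ)]
    exact alg_aux _ _ _ _ _ _ hFj hs hqd hsub
  have hw0 : w 0 = 0 := by simp [hw]; ring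
  have hkey : ∑' k, w k = (p*ρ*(q-q⁻¹)^2) * A := by
    rw [hsw.tsum_eq_zero_add, hw0, zero_add, hAu, ← tsum_mul_left]
    exact tsum_congr hterm
  -- Step 3: conclude
  have hring : (p*ρ*(q-q⁻¹)^2) = -(p * ((1-q^2)*(1-(q^2)⁻¹)*ρ)) := by
    field_simp
    ring
  have hden : (1-q^2)*(1-(q^2)⁻¹)*ρ ≠ 0 := mul_ne_zero (mul_ne_zero h1 h2) hρ'
  rw [hBox, ← hAu, hcomb, hkey, hring, neg_mul, neg_div,
    show p * ((1-q^2)*(1-(q^2)⁻¹)*ρ) * A = ((1-q^2)*(1-(q^2)⁻¹)*ρ) * (p*A) from by ring,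
    mul_div_cancel_left₀ _ hden, neg_add_cancel]
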